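/- Any linear partial differential operator of the second order on space-time ℝ×ℝⁿ (with continuous coefficients and not all second-order coefficients vanishing) that is both Poincaré invariant and dilation invariant is of the form L = α□ for some α ∈ ℂ\{0}. -/

import Mathlib

open scoped BigOperators

noncomputable section

/-- Partial derivative in the `i`-th coordinate direction. -/
def pd {d : ℕ} (i : Fin d) (u : (Fin d → ℝ) → ℂ) : (Fin d → ℝ) → ℂ :=
  fun x => fderiv ℝ u x (Pi.single i 1)

/-- Iterated mixed partial derivative `∂^β` for a multi-index `β`. -/
def pdMulti {d : ℕ} (β : Fin d → ℕ) (u : (Fin d → ℝ) → ℂ) : (Fin d → ℝ) → ℂ :=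
  (List.finRange d).foldr (fun i v => (pd i)^[β i] v) u

/-- The finite set of multi-indices (on `d` variables) of total degree at most `m`. -/
def mIdx (d m : ℕ) : Finset (Fin d → ℕ) :=
  (Fintype.piFinset fun _ : Fin d => Finset.range (m + 1)).filter fun β => (∑ i, β i) ≤ m

/-- The linear partial differential operator `L = ∑_{|β| ≤ m} a_β ∂^β`. -/
def opApply {d : ℕ} (m : ℕ) (a : (Fin d → ℕ) → (Fin d → ℝ) → ℂ)
    (u : (Fin d → ℝ) → ℂ) : (Fin d → ℝ) → ℂ :=
  fun x => ∑ β ∈ mIdx d m, a β x * pdMulti β u x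

/-- Smooth (`C^∞`) functions. -/
def SmoothFn {d : ℕ} (u : (Fin d → ℝ) → ℂ) : Prop := ContDiff ℝ (⊤ : ℕ∞) u

/-- The Minkowski metric matrix `g = diag(1, -1, …, -1)` on `ℝ × ℝⁿ`. -/
def minkMatrix (n : ℕ) : Matrix (Fin (n + 1)) (Fin (n + 1)) ℝ :=
  Matrix.diagonal fun i => if i = 0 then 1 else -1

/-- Membership in the Lorentz group `O(1,n)`:  `ᵗΛ g Λ = g`. -/
def IsLorentz {n : ℕ} (Λ : Matrix (Fin (n + 1)) (Fin (n + 1)) ℝ) : Prop :=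
  Λ.transpose * minkMatrix n * Λ = minkMatrix n

/-- The d'Alembertian `□ = ∂_t² - ∂₁² - ⋯ - ∂ₙ²` on space-time `ℝ × ℝⁿ`
(coordinate `0` is time). -/
def dAlem {n : ℕ} (u : (Fin (n + 1) → ℝ) → ℂ) : (Fin (n + 1) → ℝ) → ℂ :=
  fun x => pd 0 (pd 0 u) x - ∑ j : Fin n, pd j.succ (pd j.succ u) x

/-- `L` is translation invariant: `T_y^* L u = L T_y^* u`. -/
def TransInv {n : ℕ} (m : ℕ) (a : (Fin (n + 1) → ℕ) → (Fin (n + 1) → ℝ) → ℂ) : Prop :=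
  ∀ y : Fin (n + 1) → ℝ, ∀ u : (Fin (n + 1) → ℝ) → ℂ, SmoothFn u →
    ∀ x, opApply m a u (x - y) = opApply m a (fun z => u (z - y)) x

/-- `L` is Lorentz invariant: `Λ^* L u = L Λ^* u` for all `Λ ∈ O(1,n)`. -/
def LorentzInv {n : ℕ} (m : ℕ) (a : (Fin (n + 1) → ℕ) → (Fin (n + 1) → ℝ) → ℂ) : Prop :=
  ∀ Λ : Matrix (Fin (n + 1)) (Fin (n + 1)) ℝ, IsLorentz Λ →
    ∀ u : (Fin (n + 1) → ℝ) → ℂ, SmoothFn u →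
      ∀ x, opApply m a u (Λ.mulVec x) = opApply m a (fun z => u (Λ.mulVec z)) x

/-- `L` is dilation invariant: for every nonzero smooth `u`, the statements `Lu = 0`,
`L D_λ^* u = 0` for all `λ > 0`, and `L D_λ^* u = 0` for some `λ > 0` with `λ ≠ 1`,
are equivalent. -/
def DilInv {n : ℕ} (m : ℕ) (a : (Fin (n + 1) → ℕ) → (Fin (n + 1) → ℝ) → ℂ) : Prop :=
  ∀ u : (Fin (n + 1) → ℝ) → ℂ, SmoothFn u → u ≠ 0 →
    ((opApply m a u = 0 ↔ ∀ r : ℝ, 0 < r → opApply m a (fun x => u (r • x)) = 0) ∧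
     (opApply m a u = 0 ↔ ∃ r : ℝ, 0 < r ∧ r ≠ 1 ∧ opApply m a (fun x => u (r • x)) = 0))

-- ============ auxiliary machinery ============

section Aux

open scoped BigOperators

lemma mem_mIdx {d m : ℕ} {β : Fin d → ℕ} : β ∈ mIdx d m ↔ (∑ i, β i) ≤ m := by
  constructor
  · intro h; exact (Finset.mem_filter.mp h).2
  · intro h
    refine Finset.mem_filter.mpr ⟨Fintype.mem_piFinset.mpr fun i => ?_, h⟩
    refine Finset.mem_range.mpr (Nat.lt_succ_of_le (le_trans ?_ h))
    exact Finset.single_le_sum (fun k _ => Nat.zero_le _) (Finset.mem_univ i)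

lemma indep {d m : ℕ} (c : (Fin d → ℕ) → ℂ)
    (h : ∀ ζ : Fin d → ℂ, ∑ β ∈ mIdx d m, c β * ∏ i, ζ i ^ β i = 0) :
    ∀ β ∈ mIdx d m, c β = 0 := by
  intro β₀ hβ₀
  set p : MvPolynomial (Fin d) ℂ :=
    ∑ β ∈ mIdx d m, MvPolynomial.monomial (Finsupp.equivFunOnFinite.symm β) (c β) with hp
  have heval : ∀ ζ : Fin d → ℂ, MvPolynomial.eval ζ p = 0 := by
    intro ζ
    rw [hp, map_sum, ← h ζ]
    refine Finset.sum_congr rfl fun β _ => ?_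
    rw [MvPolynomial.eval_monomial]
    congr 1
    rw [Finsupp.prod_pow]
    rfl
  have hp0 : p = 0 := MvPolynomial.funext (by simpa using heval)
  have hc : MvPolynomial.coeff (Finsupp.equivFunOnFinite.symm β₀) p = c β₀ := by
    rw [hp, MvPolynomial.coeff_sum, Finset.sum_eq_single β₀]
    · simp [MvPolynomial.coeff_monomial]
    · intro β hβ hne
      rw [MvPolynomial.coeff_monomial, if_neg]
      intro he
      exact hne (Finsupp.equivFunOnFinite.symm.injective he)
    · intro h'; exact absurd hβ₀ h'
  rw [hp0] at hc
  simpa using hc.symm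

lemma foldr_zero {d : ℕ} (β : Fin d → ℕ) (u : (Fin d → ℝ) → ℂ) :
    ∀ l : List (Fin d), (∀ k ∈ l, β k = 0) →
      l.foldr (fun i v => (pd i)^[β i] v) u = u := by
  intro l
  induction l with
  | nil => intro _; rfl
  | cons i l ih =>
    intro h
    rw [List.foldr_cons, ih (fun k hk => h k (List.mem_cons_of_mem _ hk)),
      h i List.mem_cons_self]
    rfl

lemma foldr_single {d : ℕ} (i : Fin d) (m' : ℕ) (u : (Fin d → ℝ) → ℂ) :
    ∀ l : List (Fin d), l.Nodup → i ∈ l →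
      l.foldr (fun k v => (pd k)^[(Pi.single i m' : Fin d → ℕ) k] v) u = (pd i)^[m'] u := by
  intro l
  induction l with
  | nil => intro _ h; simp at h
  | cons k l ih =>
    intro hnd hmem
    rw [List.foldr_cons]
    rcases List.nodup_cons.mp hnd with ⟨hk, hnd'⟩
    by_cases hik : k = i
    · subst hik
      rw [foldr_zero]
      · simp
      · intro j hj
        refine Pi.single_eq_of_ne (fun he => hk ?_) _
        rw [← he]; exact hj
    · have hil : i ∈ l := by
        rcases List.mem_cons.mp hmem with h | h
        · exact absurd h.symm hik
        · exact h
      rw [Pi.single_eq_of_ne hik, ih hnd' hil]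
      rfl

lemma pdMulti_single {d : ℕ} (i : Fin d) (m' : ℕ) (u : (Fin d → ℝ) → ℂ) :
    pdMulti (Pi.single i m') u = (pd i)^[m'] u := by
  rw [pdMulti, foldr_single i m' u _ (List.nodup_finRange d) (List.mem_finRange i)]

lemma pdMulti_single_two {d : ℕ} (i : Fin d) (u : (Fin d → ℝ) → ℂ) :
    pdMulti (Pi.single i 2) u = pd i (pd i u) := by
  rw [pdMulti_single]
  rw [show (2:ℕ) = 1 + 1 from rfl, Function.iterate_add_apply]
  simp

/-- the real-linear form `x ↦ ∑ ζ i * x i` -/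
def lin {d : ℕ} (ζ : Fin d → ℂ) : (Fin d → ℝ) →L[ℝ] ℂ :=
  ∑ i, ζ i • ((Complex.ofRealCLM).comp (ContinuousLinearMap.proj i))

lemma lin_apply {d : ℕ} (ζ : Fin d → ℂ) (x : Fin d → ℝ) :
    lin ζ x = ∑ i, ζ i * (x i : ℂ) := by
  simp [lin, ContinuousLinearMap.sum_apply, smul_eq_mul]

lemma lin_single {d : ℕ} (ζ : Fin d → ℂ) (i : Fin d) :
    lin ζ (Pi.single i 1) = ζ i := by
  rw [lin_apply, Finset.sum_eq_single i]
  · simp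
  · intro k _ hk; simp [Pi.single_eq_of_ne hk]
  · simp

/-- exponential test function -/
def expF {d : ℕ} (ζ : Fin d → ℂ) : (Fin d → ℝ) → ℂ := fun x => Complex.exp (lin ζ x)

lemma expF_smooth {d : ℕ} (ζ : Fin d → ℂ) : SmoothFn (expF ζ) :=
  ((lin ζ).contDiff).cexp

lemma expF_ne {d : ℕ} (ζ : Fin d → ℂ) (x : Fin d → ℝ) : expF ζ x ≠ 0 :=
  Complex.exp_ne_zero _

lemma expF_zero_pt {d : ℕ} (ζ : Fin d → ℂ) : expF ζ 0 = 1 := by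
  simp [expF]

lemma expF_add {d : ℕ} (ζ : Fin d → ℂ) (x y : Fin d → ℝ) :
    expF ζ (x + y) = expF ζ x * expF ζ y := by
  simp [expF, map_add, Complex.exp_add]

lemma pd_expF {d : ℕ} (ζ : Fin d → ℂ) (c : ℂ) (i : Fin d) :
    pd i (fun x => c * expF ζ x) = fun x => ζ i * (c * expF ζ x) := by
  funext x
  have h : HasFDerivAt (fun x => c * expF ζ x)
      (c • (Complex.exp (lin ζ x) • (lin ζ))) x :=
    ((lin ζ).hasFDerivAt.cexp).const_mul c
  rw [pd, h.fderiv]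
  simp [lin_single, expF, smul_eq_mul]
  ring

lemma pd_iter_expF {d : ℕ} (ζ : Fin d → ℂ) (i : Fin d) :
    ∀ (k : ℕ) (c : ℂ), (pd i)^[k] (fun x => c * expF ζ x)
      = fun x => ζ i ^ k * (c * expF ζ x) := by
  intro k
  induction k with
  | zero => intro c; simp
  | succ k ih =>
    intro c
    rw [Function.iterate_succ_apply, pd_expF]
    have h2 : (fun x => ζ i * (c * expF ζ x)) = fun x => (ζ i * c) * expF ζ x := by
      funext x; ring
    rw [h2, ih]
    funext x; ring

lemma foldr_expF {d : ℕ} (ζ : Fin d → ℂ) (β : Fin d → ℕ) :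
    ∀ (l : List (Fin d)) (c : ℂ),
      l.foldr (fun i v => (pd i)^[β i] v) (fun x => c * expF ζ x)
        = fun x => (l.map fun i => ζ i ^ β i).prod * (c * expF ζ x) := by
  intro l
  induction l with
  | nil => intro c; simp
  | cons i l ih =>
    intro c
    rw [List.foldr_cons, ih, List.map_cons, List.prod_cons]
    have h2 : (fun x => (l.map fun i => ζ i ^ β i).prod * (c * expF ζ x))
        = fun x => ((l.map fun i => ζ i ^ β i).prod * c) * expF ζ x := by
      funext x; ring
    rw [h2, pd_iter_expF]
    funext x; ring

lemma pdMulti_expF {d : ℕ} (ζ : Fin d → ℂ) (β : Fin d → ℕ) (c : ℂ) :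
    pdMulti β (fun x => c * expF ζ x) = fun x => (∏ i, ζ i ^ β i) * (c * expF ζ x) := by
  rw [pdMulti, foldr_expF, Fin.prod_univ_def]

/-- the full symbol of the operator -/
def symb {d : ℕ} (m : ℕ) (a : (Fin d → ℕ) → (Fin d → ℝ) → ℂ)
    (ζ : Fin d → ℂ) (x : Fin d → ℝ) : ℂ :=
  ∑ β ∈ mIdx d m, a β x * ∏ i, ζ i ^ β i

lemma opApply_expF {d m : ℕ} (a : (Fin d → ℕ) → (Fin d → ℝ) → ℂ) (ζ : Fin d → ℂ) (c : ℂ) :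
    opApply m a (fun x => c * expF ζ x)
      = fun x => symb m a ζ x * (c * expF ζ x) := by
  funext x
  rw [opApply, symb, Finset.sum_mul]
  refine Finset.sum_congr rfl fun β _ => ?_
  rw [pdMulti_expF]
  ring

lemma opApply_expF' {d m : ℕ} (a : (Fin d → ℕ) → (Fin d → ℝ) → ℂ) (ζ : Fin d → ℂ) :
    opApply m a (expF ζ) = fun x => symb m a ζ x * expF ζ x := by
  have h := opApply_expF (m := m) a ζ 1
  simp only [one_mul] at h
  exact h

def tact {d : ℕ} (Λ : Matrix (Fin d) (Fin d) ℝ) (ζ : Fin d → ℂ) : Fin d → ℂ :=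
  fun j => ∑ i, (Λ i j : ℂ) * ζ i

lemma expF_mulVec {d : ℕ} (Λ : Matrix (Fin d) (Fin d) ℝ) (ζ : Fin d → ℂ) (x : Fin d → ℝ) :
    expF ζ (Λ.mulVec x) = expF (tact Λ ζ) x := by
  unfold expF
  congr 1
  rw [lin_apply, lin_apply]
  have h : ∀ i, (ζ i * ((Λ.mulVec x i : ℝ) : ℂ)) = ∑ j, ζ i * (Λ i j : ℂ) * (x j : ℂ) := by
    intro i
    rw [Matrix.mulVec, dotProduct]
    push_cast
    rw [Finset.mul_sum]
    exact Finset.sum_congr rfl fun j _ => by ring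
  rw [Finset.sum_congr rfl fun i _ => h i, Finset.sum_comm]
  refine Finset.sum_congr rfl fun j _ => ?_
  rw [tact, Finset.sum_mul]
  exact Finset.sum_congr rfl fun i _ => by ring

lemma expF_smul {d : ℕ} (r : ℝ) (ζ : Fin d → ℂ) :
    (fun x : Fin d → ℝ => expF ζ (r • x)) = expF ((r : ℂ) • ζ) := by
  funext x
  unfold expF
  congr 1
  rw [lin_apply, lin_apply]
  refine Finset.sum_congr rfl fun i _ => ?_
  simp [Pi.smul_apply, smul_eq_mul]
  ring

lemma tact_diagonal {d : ℕ} (ε : Fin d → ℝ) (ζ : Fin d → ℂ) :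
    tact (Matrix.diagonal ε) ζ = fun j => (ε j : ℂ) * ζ j := by
  funext j
  rw [tact, Finset.sum_eq_single j]
  · rw [Matrix.diagonal_apply_eq]
  · intro i _ hij
    rw [Matrix.diagonal_apply_ne _ hij]; simp
  · simp

lemma sign_lorentz {n : ℕ} (ε : Fin (n+1) → ℝ) (hε : ∀ i, ε i = 1 ∨ ε i = -1) :
    IsLorentz (Matrix.diagonal ε) := by
  unfold IsLorentz minkMatrix
  rw [Matrix.diagonal_transpose, Matrix.diagonal_mul_diagonal, Matrix.diagonal_mul_diagonal]
  have h : (fun i => (ε i * if i = 0 then (1:ℝ) else -1) * ε i)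
      = fun i => if i = 0 then (1:ℝ) else -1 := by
    funext i
    rcases hε i with h | h <;> rw [h] <;> ring
  rw [h]

/-- the boost matrix in the (0, s) plane, cosh = 5/4, sinh = 3/4 -/
def boost {n : ℕ} (s : Fin (n+1)) : Matrix (Fin (n+1)) (Fin (n+1)) ℝ :=
  Matrix.of fun i k =>
    if i = 0 then (if k = 0 then 5/4 else if k = s then 3/4 else 0)
    else if i = s then (if k = 0 then 3/4 else if k = s then 5/4 else 0)
    else if i = k then 1 else 0

lemma boost_lorentz {n : ℕ} (s : Fin (n+1)) (hs : s ≠ 0) : IsLorentz (boost s) := by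
  unfold IsLorentz minkMatrix
  funext i k
  rw [Matrix.mul_apply]
  simp only [Matrix.mul_diagonal, Matrix.transpose_apply]
  have h0 : ((0:Fin (n+1)) : Fin (n+1)) ∈ Finset.univ := Finset.mem_univ _
  have hsmem : s ∈ (Finset.univ : Finset (Fin (n+1))).erase 0 :=
    Finset.mem_erase.mpr ⟨hs, Finset.mem_univ _⟩
  set f : Fin (n+1) → ℝ :=
    fun l => (boost s l i * if l = 0 then (1:ℝ) else -1) * boost s l k with hf
  have e1 : ∑ l, f l = f 0 + ∑ l ∈ Finset.univ.erase 0, f l :=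
    (Finset.add_sum_erase _ f h0).symm
  have e2 : ∑ l ∈ Finset.univ.erase 0, f l
      = f s + ∑ l ∈ (Finset.univ.erase 0).erase s, f l :=
    (Finset.add_sum_erase _ f hsmem).symm
  have e3 : ∑ l ∈ (Finset.univ.erase 0).erase s, f l
      = ∑ l ∈ (Finset.univ.erase 0).erase s,
          (if l = i then (if i = k then (-1:ℝ) else 0) else 0) := by
    refine Finset.sum_congr rfl fun l hl => ?_
    rcases Finset.mem_erase.mp hl with ⟨hls, hl'⟩
    rcases Finset.mem_erase.mp hl' with ⟨hl0, -⟩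
    simp only [hf, boost, Matrix.of_apply, if_neg hl0, if_neg hls]
    by_cases hli : l = i
    · subst hli
      rcases eq_or_ne l k with hlk | hlk <;> simp [hlk]
    · simp [hli]
  have e4 : ∑ l ∈ (Finset.univ.erase 0).erase s,
        (if l = i then (if i = k then (-1:ℝ) else 0) else 0)
      = if i ∈ (Finset.univ.erase 0).erase s then (if i = k then (-1:ℝ) else 0) else 0 :=
    Finset.sum_ite_eq' _ _ _
  have hfs : f 0 = boost s 0 i * boost s 0 k := by simp [hf]
  have hgs : f s = -(boost s s i * boost s s k) := by
    simp only [hf, if_neg hs]; ring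
  rw [e1, e2, e3, e4, hfs, hgs]
  simp only [boost, Matrix.of_apply, if_pos rfl, if_neg hs, Matrix.diagonal_apply,
    Finset.mem_erase, Finset.mem_univ, and_true]
  by_cases hi0 : i = 0
  · by_cases hk0 : k = 0
    · simp [hi0, hk0, hs]; norm_num
    · by_cases hks : k = s
      · simp [hi0, hks, hs, Ne.symm hs]; norm_num
      · simp [hi0, hk0, hks, hs, Ne.symm hs, Ne.symm hk0]
  · by_cases his : i = s
    · by_cases hk0 : k = 0
      · simp [his, hk0, hs, Ne.symm hs]; norm_num
      · by_cases hks : k = s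
        · simp [his, hks, hs]; norm_num
        · simp [his, hk0, hks, hs, Ne.symm hks]
    · by_cases hik : i = k
      · simp [hik, hi0, his, Ne.symm hi0, Ne.symm his, hik ▸ hi0, hik ▸ his]
      · simp [hi0, his, hik, Ne.symm hik]
        all_goals (intro h; exact absurd h.symm hik)

/-- classification of all-even multi-indices of degree at most 2 -/
lemma classify {d : ℕ} {β : Fin d → ℕ} (h2 : ∑ i, β i ≤ 2) (hev : ∀ i, Even (β i)) :
    β = (fun _ => 0) ∨ ∃ i, β = Pi.single i 2 := by
  by_cases h0 : ∀ i, β i = 0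
  · left; funext i; exact h0 i
  · right
    push_neg at h0
    obtain ⟨i, hi⟩ := h0
    have hge : 2 ≤ β i := by
      rcases hev i with ⟨k, hk⟩
      omega
    have hle : β i ≤ ∑ k, β k :=
      Finset.single_le_sum (fun k _ => Nat.zero_le _) (Finset.mem_univ i)
    have hβi : β i = 2 := le_antisymm (le_trans hle h2) hge
    refine ⟨i, funext fun k => ?_⟩
    by_cases hk : k = i
    · subst hk; rw [Pi.single_eq_same]; exact hβi
    · rw [Pi.single_eq_of_ne hk]
      have hmem : k ∈ Finset.univ.erase i := Finset.mem_erase.mpr ⟨hk, Finset.mem_univ _⟩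
      have h1 : β k ≤ ∑ l ∈ Finset.univ.erase i, β l :=
        Finset.single_le_sum (fun l _ => Nat.zero_le _) hmem
      have h2' : β i + ∑ l ∈ Finset.univ.erase i, β l = ∑ l, β l :=
        Finset.add_sum_erase _ β (Finset.mem_univ i)
      omega

lemma single_two_mem_mIdx {d : ℕ} (i : Fin d) : (Pi.single i 2 : Fin d → ℕ) ∈ mIdx d 2 := by
  rw [mem_mIdx, Finset.sum_eq_single i]
  · rw [Pi.single_eq_same]
  · intro k _ hk; exact Pi.single_eq_of_ne hk _
  · intro h; exact absurd (Finset.mem_univ i) h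

lemma zero_mem_mIdx {d : ℕ} : (fun _ => 0 : Fin d → ℕ) ∈ mIdx d 2 := by
  rw [mem_mIdx]; simp

lemma prod_pow_single {d : ℕ} (ζ : Fin d → ℂ) (i : Fin d) :
    ∏ k, ζ k ^ (Pi.single i 2 : Fin d → ℕ) k = ζ i ^ 2 := by
  rw [Finset.prod_eq_single i]
  · rw [Pi.single_eq_same]
  · intro k _ hk; rw [Pi.single_eq_of_ne hk]; exact pow_zero _
  · intro h; exact absurd (Finset.mem_univ i) h

lemma single_two_inj {d : ℕ} {i j : Fin d}
    (h : (Pi.single i 2 : Fin d → ℕ) = Pi.single j 2) : i = j := by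
  by_contra hne
  have := congrFun h i
  rw [Pi.single_eq_same, Pi.single_eq_of_ne hne] at this
  exact two_ne_zero this

/-- structure of a sum over `mIdx d 2` whose odd coefficients vanish -/
lemma symb_special {d : ℕ} (c : (Fin d → ℕ) → ℂ)
    (hvan : ∀ β ∈ mIdx d 2, (¬ ∀ i, Even (β i)) → c β = 0)
    (ζ : Fin d → ℂ) :
    ∑ β ∈ mIdx d 2, c β * ∏ i, ζ i ^ β i
      = c (fun _ => 0) + ∑ i, c (Pi.single i 2) * ζ i ^ 2 := by
  classical
  set S : Finset (Fin d → ℕ) :=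
    insert (fun _ => 0) (Finset.image (fun i : Fin d => (Pi.single i 2 : Fin d → ℕ))
      Finset.univ) with hS
  have hsub : S ⊆ mIdx d 2 := by
    intro β hβ
    rcases Finset.mem_insert.mp hβ with h | h
    · subst h; exact zero_mem_mIdx
    · obtain ⟨i, -, rfl⟩ := Finset.mem_image.mp h
      exact single_two_mem_mIdx i
  have hzero : ∀ β ∈ mIdx d 2, β ∉ S → c β * ∏ i, ζ i ^ β i = 0 := by
    intro β hβ hβS
    by_cases hev : ∀ i, Even (β i)
    · rcases classify (mem_mIdx.mp hβ) hev with h | ⟨i, hi⟩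
      · exact absurd (h ▸ Finset.mem_insert_self _ _) hβS
      · refine absurd ?_ hβS
        rw [hS, hi]
        exact Finset.mem_insert_of_mem (Finset.mem_image_of_mem _ (Finset.mem_univ i))
    · rw [hvan β hβ hev, zero_mul]
  have hnot : (fun _ => 0 : Fin d → ℕ) ∉
      Finset.image (fun i : Fin d => (Pi.single i 2 : Fin d → ℕ)) Finset.univ := by
    intro h
    obtain ⟨i, -, hi⟩ := Finset.mem_image.mp h
    have h2 := congrFun hi i
    rw [Pi.single_eq_same] at h2
    exact two_ne_zero h2
  have hinj : ∀ i ∈ (Finset.univ : Finset (Fin d)), ∀ j ∈ (Finset.univ : Finset (Fin d)),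
      (Pi.single i 2 : Fin d → ℕ) = Pi.single j 2 → i = j := fun i _ j _ h => single_two_inj h
  rw [← Finset.sum_subset hsub hzero, hS, Finset.sum_insert hnot, Finset.sum_image hinj]
  congr 1
  · simp
  · exact Finset.sum_congr rfl fun i _ => by rw [prod_pow_single]

end Aux

section Steps

open scoped BigOperators

lemma step_T {n : ℕ} (m : ℕ) (a : (Fin (n+1) → ℕ) → (Fin (n+1) → ℝ) → ℂ)
    (hT : TransInv m a) (ζ : Fin (n+1) → ℂ) (x : Fin (n+1) → ℝ) :
    symb m a ζ x = symb m a ζ 0 := by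
  have h := hT x (expF ζ) (expF_smooth ζ) x
  have hfun : (fun z => expF ζ (z - x)) = fun z : Fin (n+1) → ℝ => expF ζ (-x) * expF ζ z := by
    funext z
    rw [sub_eq_add_neg, expF_add]
    ring
  have hee : expF ζ x * expF ζ (-x) = 1 := by
    rw [← expF_add, add_neg_cancel, expF_zero_pt]
  simp only [hfun, opApply_expF, opApply_expF', sub_self, expF_zero_pt, mul_one] at h
  rw [mul_comm (expF ζ (-x)), ← mul_assoc, mul_assoc, hee, mul_one] at h
  exact h.symm

lemma step_L {n : ℕ} (m : ℕ) (a : (Fin (n+1) → ℕ) → (Fin (n+1) → ℝ) → ℂ)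
    (hL : LorentzInv m a) (Λ : Matrix (Fin (n+1)) (Fin (n+1)) ℝ) (hΛ : IsLorentz Λ)
    (ζ : Fin (n+1) → ℂ) :
    symb m a ζ 0 = symb m a (tact Λ ζ) 0 := by
  have h := hL Λ hΛ (expF ζ) (expF_smooth ζ) 0
  have hfun : (fun z => expF ζ (Λ.mulVec z)) = expF (tact Λ ζ) :=
    funext fun z => expF_mulVec Λ ζ z
  simp only [hfun, opApply_expF', Matrix.mulVec_zero, expF_zero_pt, mul_one] at h
  exact h

lemma step_D {n : ℕ} (m : ℕ) (a : (Fin (n+1) → ℕ) → (Fin (n+1) → ℝ) → ℂ)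
    (hD : DilInv m a) (hT : TransInv m a)
    (ζ : Fin (n+1) → ℂ) (hζ : symb m a ζ 0 = 0) :
    ∀ r : ℝ, 0 < r → symb m a ((r : ℂ) • ζ) 0 = 0 := by
  have hne : expF ζ ≠ 0 := by
    intro h
    have h0 := congrFun h 0
    rw [expF_zero_pt] at h0
    exact one_ne_zero h0
  obtain ⟨h1, -⟩ := hD (expF ζ) (expF_smooth ζ) hne
  have key : ∀ ξ : Fin (n+1) → ℂ, (opApply m a (expF ξ) = 0 ↔ symb m a ξ 0 = 0) := by
    intro ξ
    rw [opApply_expF']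
    constructor
    · intro h
      have h0 : symb m a ξ 0 * expF ξ 0 = 0 := congrFun h 0
      rw [expF_zero_pt, mul_one] at h0
      exact h0
    · intro h
      funext x
      show symb m a ξ x * expF ξ x = 0
      rw [step_T m a hT ξ x, h, zero_mul]
  intro r hr
  have h2 := (h1.mp ((key ζ).mpr hζ)) r hr
  rw [expF_smul] at h2
  exact (key _).mp h2

end Steps

/-- Corollary 2: Any Poincaré and dilation invariant linear partial
differential operator of the second order on space-time `ℝ × ℝⁿ` is of the form
`L = α □` with `α ≠ 0`. -/
theorem second_order_poincare_dilation_invariant (n : ℕ)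
    (a : (Fin (n + 1) → ℕ) → (Fin (n + 1) → ℝ) → ℂ)
    (hcont : ∀ β ∈ mIdx (n + 1) 2, Continuous (a β))
    (htop : ∃ β ∈ mIdx (n + 1) 2, (∑ i, β i) = 2 ∧ ∃ x, a β x ≠ 0)
    (hT : TransInv 2 a) (hL : LorentzInv 2 a) (hD : DilInv 2 a) :
    ∃ α : ℂ, α ≠ 0 ∧
      ∀ u : (Fin (n + 1) → ℝ) → ℂ, SmoothFn u → ∀ x,
        opApply 2 a u x = α * dAlem u x := by
  classical
  -- coefficients are constant
  have hcoef : ∀ β ∈ mIdx (n+1) 2, ∀ x, a β x = a β 0 := by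
    intro β hβ x
    have key : ∀ ζ : Fin (n+1) → ℂ,
        ∑ β ∈ mIdx (n+1) 2, (a β x - a β 0) * ∏ i, ζ i ^ β i = 0 := by
      intro ζ
      have hsum : ∑ β ∈ mIdx (n+1) 2, (a β x - a β 0) * ∏ i, ζ i ^ β i
          = symb 2 a ζ x - symb 2 a ζ 0 := by
        rw [symb, symb, ← Finset.sum_sub_distrib]
        exact Finset.sum_congr rfl fun β _ => by ring
      rw [hsum, step_T 2 a hT ζ x, sub_self]
    exact sub_eq_zero.mp (indep (fun β => a β x - a β 0) key β hβ)
  -- coefficients with some odd exponent vanish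
  have hsign : ∀ β ∈ mIdx (n+1) 2, (¬ ∀ i, Even (β i)) → a β 0 = 0 := by
    intro β hβ hev
    push_neg at hev
    obtain ⟨i₀, hodd'⟩ := hev
    have hodd : Odd (β i₀) := Nat.not_even_iff_odd.mp hodd'
    set ε : Fin (n+1) → ℝ := fun k => if k = i₀ then -1 else 1 with hε
    have hεpm : ∀ i, ε i = 1 ∨ ε i = -1 := by
      intro i; by_cases h : i = i₀ <;> simp [hε, h]
    have hQ := step_L 2 a hL (Matrix.diagonal ε) (sign_lorentz ε hεpm)
    have key : ∀ ζ : Fin (n+1) → ℂ,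
        ∑ β ∈ mIdx (n+1) 2,
          (a β 0 * ((∏ j, ((ε j : ℝ) : ℂ) ^ β j) - 1)) * ∏ i, ζ i ^ β i = 0 := by
      intro ζ
      have h2 := hQ ζ
      rw [tact_diagonal] at h2
      have hexp : symb 2 a (fun j => ((ε j : ℝ) : ℂ) * ζ j) 0
          = ∑ β ∈ mIdx (n+1) 2,
              a β 0 * ((∏ j, ((ε j : ℝ) : ℂ) ^ β j) * ∏ j, ζ j ^ β j) := by
        rw [symb]
        refine Finset.sum_congr rfl fun β _ => ?_
        rw [← Finset.prod_mul_distrib]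
        congr 1
        exact Finset.prod_congr rfl fun j _ => (mul_pow _ _ _)
      have hsplit : ∑ β ∈ mIdx (n+1) 2,
            (a β 0 * ((∏ j, ((ε j : ℝ) : ℂ) ^ β j) - 1)) * ∏ i, ζ i ^ β i
          = (∑ β ∈ mIdx (n+1) 2,
              a β 0 * ((∏ j, ((ε j : ℝ) : ℂ) ^ β j) * ∏ j, ζ j ^ β j))
            - ∑ β ∈ mIdx (n+1) 2, a β 0 * ∏ j, ζ j ^ β j := by
        rw [← Finset.sum_sub_distrib]
        exact Finset.sum_congr rfl fun β _ => by ring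
      rw [hsplit, ← hexp]
      have h3 : (∑ β ∈ mIdx (n+1) 2, a β 0 * ∏ j, ζ j ^ β j) = symb 2 a ζ 0 := rfl
      rw [h3, sub_eq_zero]
      exact h2.symm
    have h3 := indep _ key β hβ
    have hprod : (∏ j, ((ε j : ℝ) : ℂ) ^ β j) = -1 := by
      rw [Finset.prod_eq_single i₀]
      · rw [hε]
        simp only [if_pos rfl]
        push_cast
        exact Odd.neg_one_pow hodd
      · intro k _ hk
        rw [hε]; simp [hk]
      · simp
    rw [hprod] at h3
    have h4 : a β 0 * (-2) = 0 := by linear_combination h3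
    rcases mul_eq_zero.mp h4 with h | h
    · exact h
    · norm_num at h
  -- structure of the symbol
  have hform : ∀ ζ : Fin (n+1) → ℂ, symb 2 a ζ 0
      = a (fun _ => 0) 0 + ∑ i, a (Pi.single i 2) 0 * ζ i ^ 2 :=
    fun ζ => symb_special (fun β => a β 0) hsign ζ
  -- boost relations
  have hboost : ∀ j : Fin n, a (Pi.single (Fin.succ j) 2) 0 = - a (Pi.single (0:Fin (n+1)) 2) 0 := by
    intro j
    have hs : (Fin.succ j : Fin (n+1)) ≠ 0 := Fin.succ_ne_zero j
    set e0c : Fin (n+1) → ℂ := fun i => if i = 0 then 1 else 0 with he0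
    have hQ := step_L 2 a hL (boost (Fin.succ j)) (boost_lorentz _ hs) e0c
    have htact : tact (boost (Fin.succ j)) e0c
        = fun k => (((if k = 0 then (5/4:ℝ) else if k = Fin.succ j then 3/4 else 0) : ℝ) : ℂ) := by
      funext k
      rw [tact, Finset.sum_eq_single 0]
      · simp [he0, boost, Matrix.of_apply]
      · intro i _ hi
        rw [he0]; simp [hi]
      · simp
    rw [htact, hform, hform] at hQ
    have hL1 : ∑ i, a (Pi.single i 2) 0 * (e0c i) ^ 2 = a (Pi.single (0:Fin (n+1)) 2) 0 := by
      rw [Finset.sum_eq_single 0]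
      · rw [he0]; simp
      · intro i _ hi; rw [he0]; simp [hi]
      · simp
    have hR1 : ∑ i, a (Pi.single i 2) 0 *
          ((((if i = 0 then (5/4:ℝ) else if i = Fin.succ j then 3/4 else 0) : ℝ) : ℂ)) ^ 2
        = a (Pi.single (0:Fin (n+1)) 2) 0 * (5/4:ℂ)^2
          + a (Pi.single (Fin.succ j) 2) 0 * (3/4:ℂ)^2 := by
      rw [← Finset.sum_subset (Finset.subset_univ ({0, Fin.succ j} : Finset (Fin (n+1))))]
      · rw [Finset.sum_pair (Ne.symm hs)]
        congr 1
        · norm_num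
        · rw [if_neg hs, if_pos rfl]
          norm_num
      · intro i _ hi
        simp only [Finset.mem_insert, Finset.mem_singleton] at hi
        push_neg at hi
        rw [if_neg hi.1, if_neg hi.2]
        norm_num
    rw [hL1, hR1] at hQ
    linear_combination (-16/9 : ℂ) * hQ
  -- the leading coefficient is nonzero
  have halpha : a (Pi.single (0:Fin (n+1)) 2) 0 ≠ 0 := by
    obtain ⟨β, hβ, hβ2, x0, hax⟩ := htop
    have hc : a β 0 ≠ 0 := by
      rw [← hcoef β hβ x0]; exact hax
    by_cases hev : ∀ i, Even (β i)
    · rcases classify hβ2.le hev with h | ⟨i, hi⟩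
      · exfalso
        rw [h] at hβ2
        simp at hβ2
      · rw [hi] at hc
        by_cases hi0 : i = 0
        · rw [hi0] at hc
          exact hc
        · obtain ⟨j, rfl⟩ := Fin.eq_succ_of_ne_zero hi0
          rw [hboost j] at hc
          intro h
          rw [h] at hc
          simp at hc
    · exact absurd (hsign β hβ hev) hc
  -- the zeroth order coefficient vanishes
  have hc0 : a (fun _ => (0:ℕ)) 0 = 0 := by
    obtain ⟨w, hw⟩ := IsAlgClosed.exists_pow_nat_eq
      (-(a (fun _ => (0:ℕ)) 0) / a (Pi.single (0:Fin (n+1)) 2) 0) (n := 2) two_pos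
    set ζw : Fin (n+1) → ℂ := fun i => if i = 0 then w else 0 with hζw
    have hsum : ∀ t : ℂ, ∑ i, a (Pi.single i 2) 0 * (t * ζw i) ^ 2
        = a (Pi.single (0:Fin (n+1)) 2) 0 * (t*w)^2 := by
      intro t
      rw [Finset.sum_eq_single 0]
      · rw [hζw]; simp
      · intro i _ hi; rw [hζw]; simp [hi]
      · simp
    have h4 : a (Pi.single (0:Fin (n+1)) 2) 0 * w^2 = -(a (fun _ => (0:ℕ)) 0) := by
      rw [hw]
      field_simp
    have hQ0 : symb 2 a ζw 0 = 0 := by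
      rw [hform]
      have h1 : ∑ i, a (Pi.single i 2) 0 * (ζw i)^2
          = a (Pi.single (0:Fin (n+1)) 2) 0 * w^2 := by
        have := hsum 1
        simpa using this
      rw [h1, h4]
      ring
    have h2 := step_D 2 a hD hT ζw hQ0 2 two_pos
    rw [hform] at h2
    have h3 : ∑ i, a (Pi.single i 2) 0 * ((((2:ℝ):ℂ)) • ζw) i ^ 2
        = a (Pi.single (0:Fin (n+1)) 2) 0 * ((2:ℂ)*w)^2 := by
      have h5 := hsum 2
      rw [← h5]
      refine Finset.sum_congr rfl fun i _ => ?_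
      simp [Pi.smul_apply, smul_eq_mul]
      try norm_num
    rw [h3] at h2
    have h6 : a (fun _ => (0:ℕ)) 0 * (-3) = 0 := by
      linear_combination h2 - 4 * h4
    rcases mul_eq_zero.mp h6 with h | h
    · exact h
    · norm_num at h
  -- conclusion
  refine ⟨a (Pi.single (0:Fin (n+1)) 2) 0, halpha, ?_⟩
  intro u hu x
  have hstep1 : opApply 2 a u x = ∑ β ∈ mIdx (n+1) 2, a β 0 * pdMulti β u x := by
    rw [opApply]
    exact Finset.sum_congr rfl fun β hβ => by rw [hcoef β hβ x]
  have himg : Finset.image (fun i : Fin (n+1) => (Pi.single i 2 : Fin (n+1) → ℕ)) Finset.univ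
      ⊆ mIdx (n+1) 2 := by
    intro β hβ
    obtain ⟨i, -, rfl⟩ := Finset.mem_image.mp hβ
    exact single_two_mem_mIdx i
  have hvan2 : ∀ β ∈ mIdx (n+1) 2,
      β ∉ Finset.image (fun i : Fin (n+1) => (Pi.single i 2 : Fin (n+1) → ℕ)) Finset.univ →
      a β 0 * pdMulti β u x = 0 := by
    intro β hβ hβS
    by_cases hev : ∀ i, Even (β i)
    · rcases classify (mem_mIdx.mp hβ) hev with h | ⟨i, hi⟩
      · rw [h, hc0, zero_mul]
      · exfalso
        apply hβS
        rw [hi]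
        exact Finset.mem_image_of_mem _ (Finset.mem_univ i)
    · rw [hsign β hβ hev, zero_mul]
  rw [hstep1, ← Finset.sum_subset himg hvan2,
    Finset.sum_image (fun i _ j _ h => single_two_inj h)]
  have hpd : ∀ i : Fin (n+1),
      a (Pi.single i 2) 0 * pdMulti (Pi.single i 2) u x
        = a (Pi.single i 2) 0 * pd i (pd i u) x :=
    fun i => by rw [pdMulti_single_two]
  rw [Finset.sum_congr rfl fun i _ => hpd i, Fin.sum_univ_succ]
  have hsucc : ∑ j : Fin n, a (Pi.single (Fin.succ j) 2) 0 * pd j.succ (pd j.succ u) x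
      = ∑ j : Fin n, -(a (Pi.single (0:Fin (n+1)) 2) 0 * pd j.succ (pd j.succ u) x) :=
    Finset.sum_congr rfl fun j _ => by rw [hboost j]; ring
  rw [hsucc]
  show _ = a (Pi.single (0:Fin (n+1)) 2) 0
      * (pd 0 (pd 0 u) x - ∑ j : Fin n, pd j.succ (pd j.succ u) x)
  rw [Finset.sum_neg_distrib, ← Finset.mul_sum]
  ring
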